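/- Let θ and θ' be positive irrational real numbers and suppose that the ℤ-submodules of ℝ satisfy ℤ + ℤθ' = μ·(ℤ + ℤθ) for some real μ > 0. Then the regular continued fraction expansions of θ and θ' coincide except for finitely many terms: there exist natural numbers k and l such that for every i ≥ 0 the (k+i)-th partial denominator of the continued fraction of θ equals the (l+i)-th partial denominator of the continued fraction of θ'. -/

import Mathlib

open Pointwise

/-- The terms (partial denominators) of the regular continued fraction expansion of a
real number: `cfTerm θ 0 = ⌊θ⌋`, and `cfTerm θ (n+1)` is the `n`-th term of the
expansion of `1/(θ - ⌊θ⌋)`. -/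
noncomputable def cfTerm : ℝ → ℕ → ℤ
  | θ, 0 => ⌊θ⌋
  | θ, n + 1 => cfTerm (Int.fract θ)⁻¹ n

/-- The Gauss-type shift map for regular continued fractions. -/
noncomputable def cfT (x : ℝ) : ℝ := (Int.fract x)⁻¹

/-- Two reals have continued fraction expansions that eventually coincide. -/
def CFEq (x y : ℝ) : Prop := ∃ k l : ℕ, cfT^[k] x = cfT^[l] y

lemma cfTerm_succ (θ : ℝ) (n : ℕ) : cfTerm θ (n + 1) = cfTerm (cfT θ) n := rfl

lemma cfTerm_shift (k : ℕ) : ∀ (θ : ℝ) (i : ℕ), cfTerm θ (k + i) = cfTerm (cfT^[k] θ) i := by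
  induction k with
  | zero => simp
  | succ k ih =>
    intro θ i
    have h : k + 1 + i = (k + i) + 1 := by ring
    rw [h, cfTerm_succ, ih (cfT θ) i, ← Function.iterate_succ_apply]

lemma CFEq.symm {x y : ℝ} (h : CFEq x y) : CFEq y x := by
  obtain ⟨k, l, h⟩ := h; exact ⟨l, k, h.symm⟩

lemma CFEq.trans {x y z : ℝ} (h1 : CFEq x y) (h2 : CFEq y z) : CFEq x z := by
  obtain ⟨k, l, h1⟩ := h1
  obtain ⟨m, n, h2⟩ := h2
  refine ⟨m + k, l + n, ?_⟩
  rw [Function.iterate_add_apply, h1, ← Function.iterate_add_apply, Nat.add_comm,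
    Function.iterate_add_apply, h2, ← Function.iterate_add_apply]

lemma cfEq_add_int (x : ℝ) (n : ℤ) : CFEq x (x + n) :=
  ⟨1, 1, by simp [cfT, Int.fract_add_intCast]⟩

lemma Irrational.fract' {x : ℝ} (hx : Irrational x) : Irrational (Int.fract x) := by
  have := hx.sub_intCast ⌊x⌋
  rwa [Int.self_sub_floor] at this

lemma Irrational.fract_pos {x : ℝ} (hx : Irrational x) : 0 < Int.fract x := by
  rcases lt_or_eq_of_le (Int.fract_nonneg x) with h | h
  · exact h
  · exact absurd h.symm hx.fract'.ne_zero

/-- Key computation: if `0 < g < 1/2` then `cfT (1-g)⁻¹ = g⁻¹ - 1`. -/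
lemma cfT_aux {g : ℝ} (h0 : 0 < g) (h2 : g < 1 / 2) : cfT (1 - g)⁻¹ = g⁻¹ - 1 := by
  have h1 : (0 : ℝ) < 1 - g := by linarith
  have hu : (1 - g) * (1 - g)⁻¹ = 1 := mul_inv_cancel₀ h1.ne'
  have hupos : 0 < (1 - g)⁻¹ := inv_pos.mpr h1
  have l1 : 1 < (1 - g)⁻¹ := by nlinarith
  have l2 : (1 - g)⁻¹ < 2 := by nlinarith
  have hfloor : ⌊(1 - g)⁻¹⌋ = 1 := by
    rw [Int.floor_eq_iff]
    push_cast
    exact ⟨l1.le, by linarith⟩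
  have hfr : Int.fract (1 - g)⁻¹ = (1 - g)⁻¹ - 1 := by
    rw [Int.fract, hfloor]; norm_num
  have hg : g ≠ 0 := h0.ne'
  rw [cfT, hfr]
  have h3 : (1 - g)⁻¹ - 1 = g / (1 - g) := by field_simp; ring
  rw [h3, inv_div]
  field_simp

lemma cfEq_neg {x : ℝ} (hx : Irrational x) : CFEq x (-x) := by
  set f := Int.fract x with hf
  have hf0 : 0 < f := hx.fract_pos
  have hf1 : f < 1 := Int.fract_lt_one x
  have hfirr : Irrational f := hx.fract'
  have hfhalf : f ≠ 1 / 2 := by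
    intro h
    exact (by simpa using Rat.not_irrational (1 / 2) : ¬Irrational ((1 : ℝ) / 2)) (h ▸ hfirr)
  have hfneg : Int.fract (-x) = 1 - f := Int.fract_neg hf0.ne'
  have hTx : cfT x = f⁻¹ := by rw [cfT]
  have hTnx : cfT (-x) = (1 - f)⁻¹ := by rw [cfT, hfneg]
  rcases lt_or_gt_of_ne hfhalf with h | h
  · -- f < 1/2
    refine ⟨2, 3, ?_⟩
    show cfT (cfT x) = cfT (cfT (cfT (-x)))
    rw [hTnx, hTx, cfT_aux hf0 h]
    have h4 : f⁻¹ - 1 = f⁻¹ + ((-1 : ℤ) : ℝ) := by push_cast; ring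
    rw [h4, cfT, cfT, Int.fract_add_intCast]
  · -- f > 1/2
    refine ⟨3, 2, ?_⟩
    show cfT (cfT (cfT x)) = cfT (cfT (-x))
    have hg0 : 0 < 1 - f := by linarith
    have hg2 : 1 - f < 1 / 2 := by linarith
    have h5 : cfT f⁻¹ = (1 - f)⁻¹ - 1 := by
      have := cfT_aux hg0 hg2
      simpa using this
    rw [hTnx, hTx, h5]
    have h6 : (1 - f)⁻¹ - 1 = (1 - f)⁻¹ + ((-1 : ℤ) : ℝ) := by push_cast; ring
    rw [h6, cfT, cfT, Int.fract_add_intCast]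

lemma cfEq_inv_of_pos {x : ℝ} (hx : Irrational x) (hpos : 0 < x) : CFEq x x⁻¹ := by
  rcases lt_or_gt_of_ne hx.ne_one with h | h
  · -- 0 < x < 1 : cfT x = x⁻¹
    refine ⟨1, 0, ?_⟩
    show cfT x = x⁻¹
    rw [cfT, Int.fract_eq_self.mpr ⟨hpos.le, h⟩]
  · -- x > 1 : cfT x⁻¹ = x
    refine ⟨0, 1, ?_⟩
    show x = cfT x⁻¹
    have h0 : 0 < x⁻¹ := inv_pos.mpr hpos
    have h1 : x⁻¹ < 1 := by
      rw [inv_lt_one_iff₀]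
      exact Or.inr h
    rw [cfT, Int.fract_eq_self.mpr ⟨h0.le, h1⟩, inv_inv]

lemma cfEq_inv {x : ℝ} (hx : Irrational x) : CFEq x x⁻¹ := by
  rcases lt_or_gt_of_ne hx.ne_zero with hneg | hpos
  · have h1 : CFEq x (-x) := cfEq_neg hx
    have h2 : CFEq (-x) (-x)⁻¹ := cfEq_inv_of_pos hx.neg (by linarith)
    have h3 : CFEq x⁻¹ (-(x⁻¹)) := cfEq_neg hx.inv
    have h4 : (-x)⁻¹ = -(x⁻¹) := by rw [inv_neg]
    exact (h1.trans (h4 ▸ h2)).trans h3.symm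
  · exact cfEq_inv_of_pos hx hpos

lemma den_ne_zero {c d : ℤ} {x : ℝ} (hx : Irrational x) (h : c ≠ 0 ∨ d ≠ 0) :
    (c : ℝ) * x + d ≠ 0 := by
  rcases eq_or_ne c 0 with rfl | hc
  · rcases h with h | h
    · exact absurd rfl h
    · simpa using h
  · intro h0
    have hcR : (c : ℝ) ≠ 0 := Int.cast_ne_zero.mpr hc
    apply hx
    refine ⟨(-d : ℚ) / (c : ℚ), ?_⟩
    push_cast
    rw [div_eq_iff hcR]
    linarith

lemma irrational_flt {a b c d : ℤ} (hdet : a * d - b * c ≠ 0) {x : ℝ} (hx : Irrational x)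
    (hden : (c : ℝ) * x + d ≠ 0) : Irrational (((a : ℝ) * x + b) / ((c : ℝ) * x + d)) := by
  rintro ⟨q, hq⟩
  have hE : (q : ℝ) * ((c : ℝ) * x + d) = (a : ℝ) * x + b := by
    rw [hq, div_mul_cancel₀ _ hden]
  by_cases hac : (a : ℚ) - q * c = 0
  · have hacR : (a : ℝ) = (q : ℝ) * c := by
      have h1 : (((a : ℚ) - q * c : ℚ) : ℝ) = 0 := by rw [hac]; norm_num
      push_cast at h1
      linarith
    have hbd : (b : ℚ) = q * d := by
      have hbdR : (b : ℝ) = (q : ℝ) * d := by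
        linear_combination (-1 : ℝ) * hE - x * hacR
      exact_mod_cast hbdR
    have hacQ : (a : ℚ) = q * c := by linarith [hac]
    apply hdet
    have h2 : ((a * d - b * c : ℤ) : ℚ) = 0 := by push_cast; rw [hacQ, hbd]; ring
    exact_mod_cast h2
  · apply hx
    refine ⟨(q * d - b) / ((a : ℚ) - q * c), ?_⟩
    have hacR' : (a : ℝ) - (q : ℝ) * c ≠ 0 := by
      intro h0
      apply hac
      have h3 : (((a : ℚ) - q * c : ℚ) : ℝ) = 0 := by push_cast; linarith
      exact_mod_cast h3
    push_cast
    rw [div_eq_iff hacR']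
    linear_combination hE

/-- The main induction: any integer fractional linear transform of determinant `±1`
preserves the continued fraction tail equivalence class. -/
lemma key_lemma : ∀ n : ℕ, ∀ a b c d : ℤ, c.natAbs = n →
    (a * d - b * c = 1 ∨ a * d - b * c = -1) →
    ∀ x : ℝ, Irrational x → CFEq x (((a : ℝ) * x + b) / ((c : ℝ) * x + d)) := by
  intro n
  induction n using Nat.strong_induction_on with
  | _ n ih =>
    intro a b c d hc hdet x hx
    rcases eq_or_ne c 0 with rfl | hc0
    · -- base case c = 0
      have had : a * d = 1 ∨ a * d = -1 := by simpa using hdet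
      have ha : a = 1 ∨ a = -1 := by
        rcases had with h | h
        · exact Int.isUnit_iff.mp (IsUnit.of_mul_eq_one _ h)
        · exact Int.isUnit_iff.mp (IsUnit.of_mul_eq_one (-d) (by linear_combination -h))
      have hd : d = 1 ∨ d = -1 := by rcases ha with rfl | rfl <;> omega
      rcases ha with rfl | rfl <;> rcases hd with rfl | rfl
      · have h7 : (((1:ℤ) : ℝ) * x + b) / (((0:ℤ) : ℝ) * x + ((1:ℤ) : ℝ)) = x + b := by
          push_cast; field_simp; ring
        rw [h7]; exact cfEq_add_int x b
      · have h7 : (((1:ℤ) : ℝ) * x + b) / (((0:ℤ) : ℝ) * x + ((-1:ℤ) : ℝ)) = -x + ((-b : ℤ) : ℝ) := by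
          push_cast; field_simp; ring
        rw [h7]
        exact (cfEq_neg hx).trans (cfEq_add_int (-x) (-b))
      · have h7 : (((-1:ℤ) : ℝ) * x + b) / (((0:ℤ) : ℝ) * x + ((1:ℤ) : ℝ)) = -x + (b : ℝ) := by
          push_cast; field_simp; ring
        rw [h7]
        exact (cfEq_neg hx).trans (cfEq_add_int (-x) b)
      · have h7 : (((-1:ℤ) : ℝ) * x + b) / (((0:ℤ) : ℝ) * x + ((-1:ℤ) : ℝ)) = x + ((-b : ℤ) : ℝ) := by
          push_cast; field_simp; ring
        rw [h7]; exact cfEq_add_int x (-b)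
    · -- inductive step c ≠ 0
      set q : ℤ := a / c with hqdef
      set r : ℤ := a % c with hrdef
      have ha : c * q + r = a := Int.mul_ediv_add_emod a c
      have hr0 : 0 ≤ r := Int.emod_nonneg a hc0
      have hrlt : r < |c| := Int.emod_lt_abs a hc0
      have hnatlt : r.natAbs < n := by
        rw [← hc, Int.abs_eq_natAbs] at *
        omega
      have hdet2 : c * (b - q * d) - d * r = 1 ∨ c * (b - q * d) - d * r = -1 := by
        rcases hdet with h | h
        · right; linear_combination (-d : ℤ) * ha - h
        · left; linear_combination (-d : ℤ) * ha - h
      have hden1 : (c : ℝ) * x + d ≠ 0 := den_ne_zero hx (Or.inl hc0)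
      have hden2 : (r : ℝ) * x + ((b - q * d : ℤ) : ℝ) ≠ 0 := by
        apply den_ne_zero hx
        by_contra hcon
        push_neg at hcon
        obtain ⟨h1, h2⟩ := hcon
        rcases hdet2 with h | h <;> rw [h2, h1] at h <;> simp at h
      have hdetne : a * d - b * c ≠ 0 := by rcases hdet with h | h <;> omega
      have hyirr : Irrational (((a : ℝ) * x + b) / ((c : ℝ) * x + d)) :=
        irrational_flt hdetne hx hden1
      set y : ℝ := ((a : ℝ) * x + b) / ((c : ℝ) * x + d) with hydef
      have haR : (c : ℝ) * q + r = a := by exact_mod_cast ha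
      have hy' : y * ((c : ℝ) * x + d) = (a : ℝ) * x + b := by
        rw [hydef, div_mul_cancel₀ _ hden1]
      have hsub : y - q = ((r : ℝ) * x + ((b - q * d : ℤ) : ℝ)) / ((c : ℝ) * x + d) := by
        rw [eq_div_iff hden1]
        push_cast
        linear_combination hy' - x * haR
      have hz : (y - q)⁻¹ = ((c : ℝ) * x + d) / ((r : ℝ) * x + ((b - q * d : ℤ) : ℝ)) := by
        rw [hsub, inv_div]
      have hih : CFEq x (((c : ℝ) * x + d) / ((r : ℝ) * x + ((b - q * d : ℤ) : ℝ))) :=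
        ih r.natAbs hnatlt c d r (b - q * d) rfl hdet2 x hx
      have hyq : CFEq y (y - q) := by
        have h8 : y - q = y + ((-q : ℤ) : ℝ) := by push_cast; ring
        rw [h8]; exact cfEq_add_int y (-q)
      have hyqirr : Irrational (y - q) := hyirr.sub_intCast q
      have hyz : CFEq y ((y - q)⁻¹) := hyq.trans (cfEq_inv hyqirr)
      rw [hz] at hyz
      exact hih.trans hyz.symm

lemma int_combo {t : ℝ} (ht : Irrational t) {m n p : ℤ} (h : (m : ℝ) + n * t = p) :
    m = p ∧ n = 0 := by
  by_cases hn : n = 0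
  · subst hn
    simp at h
    exact ⟨by exact_mod_cast h, rfl⟩
  · exfalso
    apply ht
    refine ⟨((p : ℚ) - m) / n, ?_⟩
    have hnR : (n : ℝ) ≠ 0 := Int.cast_ne_zero.mpr hn
    push_cast
    rw [div_eq_iff hnR]
    linarith

/-- If `θ, θ'` are positive irrationals and `ℤ + ℤθ' = μ (ℤ + ℤθ)` for some
`μ > 0`, then the continued fraction expansions of `θ` and `θ'` coincide except for
finitely many terms. -/
theorem cf_tail_eq_of_proportional_modules (θ θ' : ℝ)
    (hθpos : 0 < θ) (hθ'pos : 0 < θ')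
    (hθ : Irrational θ) (hθ' : Irrational θ')
    (mu : ℝ) (hmu : 0 < mu)
    (hmod : Submodule.span ℤ ({1, θ'} : Set ℝ) = mu • Submodule.span ℤ ({1, θ} : Set ℝ)) :
    ∃ k l : ℕ, ∀ i : ℕ, cfTerm θ (k + i) = cfTerm θ' (l + i) := by
  have h1mem : (1 : ℝ) ∈ Submodule.span ℤ ({1, θ} : Set ℝ) :=
    Submodule.subset_span (by simp)
  have hθmem : θ ∈ Submodule.span ℤ ({1, θ} : Set ℝ) :=
    Submodule.subset_span (by simp)
  have h1mem' : (1 : ℝ) ∈ Submodule.span ℤ ({1, θ'} : Set ℝ) :=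
    Submodule.subset_span (by simp)
  have hθ'mem : θ' ∈ Submodule.span ℤ ({1, θ'} : Set ℝ) :=
    Submodule.subset_span (by simp)
  obtain ⟨s1, hs1, hs1eq⟩ : ∃ y ∈ Submodule.span ℤ ({1, θ} : Set ℝ), mu * y = 1 := by
    rw [hmod] at h1mem'; exact h1mem'
  obtain ⟨a, b, hab⟩ := Submodule.mem_span_pair.mp hs1
  obtain ⟨s2, hs2, hs2eq⟩ : ∃ y ∈ Submodule.span ℤ ({1, θ} : Set ℝ), mu * y = θ' := by
    rw [hmod] at hθ'mem; exact hθ'mem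
  obtain ⟨c, d, hcd⟩ := Submodule.mem_span_pair.mp hs2
  have hmumem : mu ∈ Submodule.span ℤ ({1, θ'} : Set ℝ) := by
    rw [hmod]
    have h9 : mu • (1 : ℝ) ∈ mu • Submodule.span ℤ ({1, θ} : Set ℝ) :=
      Submodule.smul_mem_pointwise_smul _ _ _ h1mem
    simpa using h9
  obtain ⟨e, f, hef⟩ := Submodule.mem_span_pair.mp hmumem
  have hmuθmem : mu * θ ∈ Submodule.span ℤ ({1, θ'} : Set ℝ) := by
    rw [hmod]
    have h9 : mu • θ ∈ mu • Submodule.span ℤ ({1, θ} : Set ℝ) :=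
      Submodule.smul_mem_pointwise_smul _ _ _ hθmem
    simpa using h9
  obtain ⟨g, h, hgh⟩ := Submodule.mem_span_pair.mp hmuθmem
  simp only [zsmul_eq_mul, mul_one] at hab hcd hef hgh
  have E1 : mu * ((a : ℝ) + b * θ) = 1 := by rw [← hs1eq, ← hab]
  have E2 : mu * ((c : ℝ) + d * θ) = θ' := by rw [← hs2eq, ← hcd]
  have E3 : (e : ℝ) + f * θ' = mu := hef
  have E4 : (g : ℝ) + h * θ' = mu * θ := hgh
  have P1 : ((a * e + b * g : ℤ) : ℝ) + ((a * f + b * h : ℤ) : ℝ) * θ' = ((1 : ℤ) : ℝ) := by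
    push_cast
    linear_combination (a : ℝ) * E3 + (b : ℝ) * E4 + E1
  have P2 : ((c * e + d * g : ℤ) : ℝ) + ((c * f + d * h - 1 : ℤ) : ℝ) * θ' = ((0 : ℤ) : ℝ) := by
    push_cast
    linear_combination (c : ℝ) * E3 + (d : ℝ) * E4 + E2
  obtain ⟨q1, q2⟩ := int_combo hθ' P1
  obtain ⟨q3, q4⟩ := int_combo hθ' P2
  have hdetmul : (a * d - b * c) * (e * h - f * g) = 1 := by
    linear_combination (c * f + d * h) * q1 - (c * e + d * g) * q2 + q4
  have hdet : a * d - b * c = 1 ∨ a * d - b * c = -1 :=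
    Int.isUnit_iff.mp (IsUnit.of_mul_eq_one _ hdetmul)
  have hden : (b : ℝ) * θ + a ≠ 0 := by
    intro h0
    have h10 : mu * ((a : ℝ) + b * θ) = 0 := by
      rw [show (a : ℝ) + b * θ = 0 by linarith]; ring
    rw [E1] at h10
    exact one_ne_zero h10
  have hy : θ' = ((d : ℝ) * θ + c) / ((b : ℝ) * θ + a) := by
    rw [eq_div_iff hden]
    linear_combination ((c : ℝ) + d * θ) * E1 - ((a : ℝ) + b * θ) * E2
  have hdet' : d * a - c * b = 1 ∨ d * a - c * b = -1 := by
    rw [Int.mul_comm d a, Int.mul_comm c b]; exact hdet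
  have hcfeq : CFEq θ θ' := by
    rw [hy]
    exact key_lemma b.natAbs d c b a rfl hdet' θ hθ
  obtain ⟨k, l, hkl⟩ := hcfeq
  exact ⟨k, l, fun i => by rw [cfTerm_shift, cfTerm_shift, hkl]⟩
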